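/- arXiv:2102.11888 — 2 statements merged into one kernel-verified Lean document; each statement's English description precedes it below -/
import Mathlib

section
/- Let ζ : [r₀, ∞) → ℝ be continuously differentiable with lim_{r→∞} r ζ(r)² = 0. Then ∫_{r₀}^∞ ζ(r)² dr ≤ 4 ∫_{r₀}^∞ (r - r₀)² (ζ'(r))² dr. -/
open MeasureTheory Set Filter

lemma hardy_finite (r₀ : ℝ) (ζ : ℝ → ℝ) (hζ : ContDiff ℝ 1 ζ)
    (R : ℝ) (hR : r₀ ≤ R) :
    ∫ r in r₀..R, (ζ r) ^ 2
      ≤ 2 * ((R - r₀) * (ζ R) ^ 2)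
        + 4 * ∫ r in r₀..R, (r - r₀) ^ 2 * (deriv ζ r) ^ 2 := by
  have hcζ : Continuous ζ := hζ.continuous
  have hcd : Continuous (deriv ζ) := hζ.continuous_deriv le_rfl
  have hder : ∀ x : ℝ, HasDerivAt (fun r => (r - r₀) * (ζ r) ^ 2)
      ((ζ x) ^ 2 + (x - r₀) * (2 * ζ x * deriv ζ x)) x := by
    intro x
    have h1 : HasDerivAt (fun r : ℝ => r - r₀) 1 x :=
      (hasDerivAt_id x).sub_const r₀
    have h2 : HasDerivAt ζ (deriv ζ x) x :=
      (hζ.differentiable one_ne_zero x).hasDerivAt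
    have h3 : HasDerivAt (fun r => (ζ r) ^ 2) (2 * ζ x ^ 1 * deriv ζ x) x := h2.pow 2
    have : HasDerivAt (fun r => (r - r₀) * (ζ r) ^ 2)
        (1 * ζ x ^ 2 + (x - r₀) * (2 * ζ x ^ 1 * deriv ζ x)) x := h1.mul h3
    convert this using 1
    ring
  have hintζ : IntervalIntegrable (fun r => (ζ r) ^ 2) volume r₀ R :=
    (hcζ.pow 2).intervalIntegrable _ _
  have hintd : IntervalIntegrable (fun r => (r - r₀) ^ 2 * (deriv ζ r) ^ 2) volume r₀ R :=
    (((continuous_id.sub continuous_const).pow 2).mul (hcd.pow 2)).intervalIntegrable _ _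
  have hintm : IntervalIntegrable (fun r => (r - r₀) * (2 * ζ r * deriv ζ r)) volume r₀ R :=
    ((continuous_id.sub continuous_const).mul
      ((continuous_const.mul hcζ).mul hcd)).intervalIntegrable _ _
  have hibp : ∫ r in r₀..R, ((ζ r) ^ 2 + (r - r₀) * (2 * ζ r * deriv ζ r))
      = (R - r₀) * (ζ R) ^ 2 := by
    have := intervalIntegral.integral_eq_sub_of_hasDerivAt
      (f := fun r => (r - r₀) * (ζ r) ^ 2)
      (fun x _ => hder x) (hintζ.add hintm)
    rw [this]; ring
  rw [intervalIntegral.integral_add hintζ hintm] at hibp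
  have hbound : ∫ r in r₀..R, -((r - r₀) * (2 * ζ r * deriv ζ r))
      ≤ ∫ r in r₀..R, ((1/2) * (ζ r) ^ 2 + 2 * ((r - r₀) ^ 2 * (deriv ζ r) ^ 2)) := by
    apply intervalIntegral.integral_mono_on hR hintm.neg
      ((hintζ.const_mul _).add (hintd.const_mul _))
    intro x _
    simp only [Pi.neg_apply]
    nlinarith [sq_nonneg (ζ x + 2 * (x - r₀) * deriv ζ x)]
  rw [intervalIntegral.integral_neg, intervalIntegral.integral_add
    (hintζ.const_mul _) (hintd.const_mul _),
    intervalIntegral.integral_const_mul, intervalIntegral.integral_const_mul] at hbound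
  linarith

lemma hardy_eps_lim (r₀ : ℝ) (ζ : ℝ → ℝ)
    (hlim : Tendsto (fun r => r * (ζ r) ^ 2) atTop (nhds 0)) :
    Tendsto (fun r => (r - r₀) * (ζ r) ^ 2) atTop (nhds 0) := by
  have h2 : Tendsto (fun r => (ζ r) ^ 2) atTop (nhds 0) := by
    have h := hlim.mul tendsto_inv_atTop_zero
    rw [zero_mul] at h
    apply h.congr'
    filter_upwards [eventually_ge_atTop (1:ℝ)] with r hr
    field_simp
  have h := hlim.sub (h2.const_mul r₀)
  rw [mul_zero, sub_zero] at h
  apply h.congr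
  intro r; ring

/-- Hardy inequality on `[r₀, ∞)` without boundary condition at `r₀`:
if `r ζ(r)² → 0` as `r → ∞`, then
`∫_{r₀}^∞ ζ² ≤ 4 ∫_{r₀}^∞ (r - r₀)² (ζ')²`. -/
theorem hardy_no_boundary (r₀ : ℝ) (ζ : ℝ → ℝ) (hζ : ContDiff ℝ 1 ζ)
    (hlim : Tendsto (fun r => r * (ζ r) ^ 2) atTop (nhds 0)) :
    ∫⁻ r in Ioi r₀, ENNReal.ofReal ((ζ r) ^ 2)
      ≤ ENNReal.ofReal 4 *
        ∫⁻ r in Ioi r₀, ENNReal.ofReal ((r - r₀) ^ 2 * (deriv ζ r) ^ 2) := by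
  have hcζ : Continuous ζ := hζ.continuous
  have hcd : Continuous (deriv ζ) := hζ.continuous_deriv le_rfl
  have hcg : Continuous (fun r => (r - r₀) ^ 2 * (deriv ζ r) ^ 2) :=
    ((continuous_id.sub continuous_const).pow 2).mul (hcd.pow 2)
  set B : ENNReal := ∫⁻ r in Ioi r₀, ENNReal.ofReal ((r - r₀) ^ 2 * (deriv ζ r) ^ 2) with hBdef
  by_cases hB : B = ⊤
  · rw [hB, ENNReal.mul_top (by norm_num)]
    exact le_top
  -- each finite-interval integral of the RHS integrand is ≤ B.toReal
  have hBr : ∀ R, r₀ ≤ R → ∫ r in r₀..R, (r - r₀) ^ 2 * (deriv ζ r) ^ 2 ≤ B.toReal := by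
    intro R hR
    have heq : ENNReal.ofReal (∫ r in r₀..R, (r - r₀) ^ 2 * (deriv ζ r) ^ 2)
        = ∫⁻ r in Ioc r₀ R, ENNReal.ofReal ((r - r₀) ^ 2 * (deriv ζ r) ^ 2) := by
      rw [intervalIntegral.integral_of_le hR,
        ofReal_integral_eq_lintegral_ofReal hcg.integrableOn_Ioc
          (Filter.Eventually.of_forall fun x =>
            mul_nonneg (sq_nonneg _) (sq_nonneg _))]
    have hle : ENNReal.ofReal (∫ r in r₀..R, (r - r₀) ^ 2 * (deriv ζ r) ^ 2) ≤ B := by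
      rw [heq]
      exact lintegral_mono_set Ioc_subset_Ioi_self
    have := ENNReal.toReal_mono hB hle
    rwa [ENNReal.toReal_ofReal (intervalIntegral.integral_nonneg hR
      (fun x _ => mul_nonneg (sq_nonneg _) (sq_nonneg _)))] at this
  -- monotonicity of the finite LHS integrals
  have hmono : ∀ R R' : ℝ, R ≤ R' → (∫ r in r₀..R, (ζ r) ^ 2) ≤ ∫ r in r₀..R', (ζ r) ^ 2 := by
    intro R R' hRR
    have hint : ∀ a b : ℝ, IntervalIntegrable (fun r => (ζ r)^2) volume a b :=
      fun a b => ((hcζ.pow 2).intervalIntegrable _ _)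
    rw [← intervalIntegral.integral_add_adjacent_intervals (hint r₀ R) (hint R R')]
    have : 0 ≤ ∫ r in R..R', (ζ r) ^ 2 :=
      intervalIntegral.integral_nonneg hRR (fun x _ => sq_nonneg _)
    linarith
  -- key real bound: every finite-interval LHS integral is ≤ 4 B.toReal
  have hkey : ∀ R, r₀ ≤ R → (∫ r in r₀..R, (ζ r) ^ 2) ≤ 4 * B.toReal := by
    intro R hR
    apply le_of_forall_pos_le_add
    intro δ hδ
    have hε := hardy_eps_lim r₀ ζ hlim
    have : ∀ᶠ r in atTop, (r - r₀) * (ζ r) ^ 2 < δ / 2 := by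
      have := hε (Iio_mem_nhds (show (0:ℝ) < δ / 2 by linarith))
      filter_upwards [this] with r hr using hr
    obtain ⟨N, hN⟩ := this.exists_forall_of_atTop
    set R' := max R N with hR'def
    have hR'1 : R ≤ R' := le_max_left _ _
    have hR'2 : r₀ ≤ R' := le_trans hR hR'1
    have h1 := hardy_finite r₀ ζ hζ R' hR'2
    have h2 := hN R' (le_max_right _ _)
    have h3 := hBr R' hR'2
    calc (∫ r in r₀..R, (ζ r) ^ 2) ≤ ∫ r in r₀..R', (ζ r) ^ 2 := hmono R R' hR'1
      _ ≤ 2 * ((R' - r₀) * (ζ R') ^ 2) + 4 * ∫ r in r₀..R', (r - r₀) ^ 2 * (deriv ζ r) ^ 2 := h1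
      _ ≤ 4 * B.toReal + δ := by linarith
  -- rewrite LHS as a supremum via withDensity
  have hIoi : Ioi r₀ = ⋃ n : ℕ, Ioc r₀ (r₀ + n) := by
    ext x
    simp only [mem_Ioi, mem_iUnion, mem_Ioc]
    constructor
    · intro hx
      obtain ⟨n, hn⟩ := exists_nat_ge (x - r₀)
      exact ⟨n, hx, by linarith⟩
    · rintro ⟨n, hn, -⟩; exact hn
  have hmeas : Measurable (fun r => ENNReal.ofReal ((ζ r) ^ 2)) :=
    (hcζ.pow 2).measurable.ennreal_ofReal
  have hLHS : ∫⁻ r in Ioi r₀, ENNReal.ofReal ((ζ r) ^ 2)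
      = ⨆ n : ℕ, ∫⁻ r in Ioc r₀ (r₀ + n), ENNReal.ofReal ((ζ r) ^ 2) := by
    rw [← withDensity_apply _ measurableSet_Ioi, hIoi,
      Directed.measure_iUnion]
    · refine iSup_congr fun n => ?_
      rw [withDensity_apply _ measurableSet_Ioc]
    · apply Monotone.directed_le
      intro n m hnm
      exact Ioc_subset_Ioc_right (by exact_mod_cast add_le_add_right (by exact_mod_cast hnm) r₀)
  rw [hLHS]
  apply iSup_le
  intro n
  have hRn : r₀ ≤ r₀ + n := le_add_of_nonneg_right n.cast_nonneg
  have heq : ∫⁻ r in Ioc r₀ (r₀ + n), ENNReal.ofReal ((ζ r) ^ 2)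
      = ENNReal.ofReal (∫ r in r₀..(r₀ + n), (ζ r) ^ 2) := by
    rw [intervalIntegral.integral_of_le hRn,
      ofReal_integral_eq_lintegral_ofReal (f := fun r => (ζ r) ^ 2)
        (show Continuous (fun r => (ζ r) ^ 2) from hcζ.pow 2).integrableOn_Ioc
        (Filter.Eventually.of_forall fun x => sq_nonneg _)]
  rw [heq]
  calc ENNReal.ofReal (∫ r in r₀..(r₀ + n), (ζ r) ^ 2)
      ≤ ENNReal.ofReal (4 * B.toReal) := ENNReal.ofReal_le_ofReal (hkey _ hRn)
    _ = ENNReal.ofReal 4 * ENNReal.ofReal B.toReal :=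
        ENNReal.ofReal_mul (by norm_num)
    _ = ENNReal.ofReal 4 * B := by rw [ENNReal.ofReal_toReal hB]
end

section
/- Let ζ : [0, ∞) → ℝ be continuous and positive, and let E₀, β, p, C₀ > 0 be constants. Assume: (i) for all 0 ≤ τ₁ ≤ τ₂, ζ(τ₂) + β ∫_{τ₁}^{τ₂} ζ(s) ds ≤ ζ(τ₁) + E₀ (τ₂ - τ₁)(τ₁ + 1)^{-p}; and (ii) for all 0 ≤ τ₀ ≤ τ₁ ≤ τ₂, ζ(τ₂) + β ∫_{τ₁}^{τ₂} ζ(s) ds ≤ ζ(τ₁) + C₀ (τ₂ - τ₁) ζ(τ₀). Then ζ(τ) ≤ (1 + C₀ β^{-1}) ζ(τ₀) for all τ ≥ τ₀, and there exists a constant C = C(C₀, E₀, β, p) > 0 such that ζ(τ) ≤ C (ζ(τ₀) + E₀)(1 + τ)^{-p} for all τ ≥ τ₀. -/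
open MeasureTheory Set

private lemma gronwall_unif (ζ : ℝ → ℝ) (hcont : Continuous ζ)
    (hpos : ∀ τ : ℝ, 0 ≤ τ → 0 < ζ τ)
    (β C₀ : ℝ) (hβ : 0 < β) (hC₀ : 0 < C₀)
    (h2 : ∀ τ₀ τ₁ τ₂ : ℝ, 0 ≤ τ₀ → τ₀ ≤ τ₁ → τ₁ ≤ τ₂ →
      ζ τ₂ + β * ∫ s in τ₁..τ₂, ζ s ≤ ζ τ₁ + C₀ * (τ₂ - τ₁) * ζ τ₀) :
    ∀ τ₀ τ : ℝ, 0 ≤ τ₀ → τ₀ ≤ τ → ζ τ ≤ max 1 (C₀ / β) * ζ τ₀ := by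
  intro τ₀ τ h0 hle
  set K : ℝ := max 1 (C₀ / β) with hK
  have hK1 : 1 ≤ K := le_max_left _ _
  have hKC : C₀ ≤ β * K := by
    have h : C₀ / β ≤ K := le_max_right _ _
    rw [div_le_iff₀ hβ] at h
    linarith [h]
  have hζ0 : 0 < ζ τ₀ := hpos τ₀ h0
  have hτ₀c : ζ τ₀ ≤ K * ζ τ₀ := by nlinarith
  set S : Set ℝ := Icc τ₀ τ ∩ ζ ⁻¹' (Iic (K * ζ τ₀)) with hS
  have hne : τ₀ ∈ S := ⟨⟨le_refl _, hle⟩, hτ₀c⟩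
  have hcomp : IsCompact S := isCompact_Icc.inter_right (isClosed_Iic.preimage hcont)
  set t₁ := sSup S with ht₁
  have hmem : t₁ ∈ S := hcomp.sSup_mem ⟨τ₀, hne⟩
  obtain ⟨⟨hta, htb⟩, htc⟩ := hmem
  simp only [mem_preimage, mem_Iic] at htc
  rcases eq_or_lt_of_le htb with heq | hlt
  · rw [← heq]; exact htc
  · have hgt : ∀ s, t₁ < s → s ≤ τ → K * ζ τ₀ < ζ s := by
      intro s hs hsτ
      by_contra hcon
      push_neg at hcon
      have hsS : s ∈ S := ⟨⟨hta.trans hs.le, hsτ⟩, hcon⟩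
      exact absurd (le_csSup hcomp.bddAbove hsS) (not_le.2 hs)
    have hge : ∀ s ∈ Icc t₁ τ, K * ζ τ₀ ≤ ζ s := by
      intro s hs
      rcases eq_or_lt_of_le hs.1 with heq' | hlt'
      · rw [← heq']
        have htend : Filter.Tendsto ζ (nhdsWithin t₁ (Ioi t₁)) (nhds (ζ t₁)) :=
          (hcont.continuousWithinAt).tendsto
        refine ge_of_tendsto htend ?_
        filter_upwards [self_mem_nhdsWithin,
          mem_nhdsWithin_of_mem_nhds (Iio_mem_nhds hlt)] with s' hs1 hs2
        exact (hgt s' hs1 (le_of_lt hs2)).le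
      · exact (hgt s hlt' hs.2).le
    have hInt : (τ - t₁) * (K * ζ τ₀) ≤ ∫ s in t₁..τ, ζ s := by
      have h := intervalIntegral.integral_mono_on hlt.le
        (intervalIntegrable_const (μ := volume) (c := K * ζ τ₀))
        (hcont.intervalIntegrable t₁ τ) hge
      rw [intervalIntegral.integral_const, smul_eq_mul] at h
      exact h
    have hIneq := h2 τ₀ t₁ τ h0 hta hlt.le
    nlinarith [mul_le_mul_of_nonneg_left hInt hβ.le,
      mul_nonneg (sub_nonneg.2 hlt.le) hζ0.le, htc,
      mul_le_mul_of_nonneg_right hKC (mul_nonneg (sub_nonneg.2 hlt.le) hζ0.le)]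

private lemma gronwall_step (ζ : ℝ → ℝ) (hcont : Continuous ζ)
    (hpos : ∀ τ : ℝ, 0 ≤ τ → 0 < ζ τ)
    (E₀ β p C₀ : ℝ) (hE₀ : 0 < E₀) (hβ : 0 < β) (hC₀ : 0 < C₀)
    (h1 : ∀ τ₁ τ₂ : ℝ, 0 ≤ τ₁ → τ₁ ≤ τ₂ →
      ζ τ₂ + β * ∫ s in τ₁..τ₂, ζ s ≤ ζ τ₁ + E₀ * (τ₂ - τ₁) * (τ₁ + 1) ^ (-p))
    (h2 : ∀ τ₀ τ₁ τ₂ : ℝ, 0 ≤ τ₀ → τ₀ ≤ τ₁ → τ₁ ≤ τ₂ →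
      ζ τ₂ + β * ∫ s in τ₁..τ₂, ζ s ≤ ζ τ₁ + C₀ * (τ₂ - τ₁) * ζ τ₀) :
    ∀ a L τ : ℝ, 0 ≤ a → 0 < L → a + L ≤ τ →
      ζ τ ≤ max 1 (C₀ / β) / β * (ζ a / L + E₀ * (a + 1) ^ (-p)) := by
  intro a L τ ha hL hτ
  set K : ℝ := max 1 (C₀ / β) with hK
  have hKpos : (0:ℝ) < K := lt_of_lt_of_le one_pos (le_max_left _ _)
  set c₀ : ℝ := (ζ a + E₀ * L * (a + 1) ^ (-p)) / (β * L) with hc₀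
  have hβL : 0 < β * L := mul_pos hβ hL
  have hc₀eq : β * L * c₀ = ζ a + E₀ * L * (a + 1) ^ (-p) := by
    rw [hc₀]; field_simp
  have hEx : ∃ t ∈ Icc a (a + L), ζ t ≤ c₀ := by
    by_contra hcon
    push_neg at hcon
    have hge : ∀ s ∈ Icc a (a + L), c₀ ≤ ζ s := fun s hs => (hcon s hs).le
    have hInt : (a + L - a) * c₀ ≤ ∫ s in a..(a + L), ζ s := by
      have h := intervalIntegral.integral_mono_on (by linarith)
        (intervalIntegrable_const (μ := volume) (c := c₀))
        (hcont.intervalIntegrable a (a + L)) hge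
      rw [intervalIntegral.integral_const, smul_eq_mul] at h
      exact h
    have hIB := h1 a (a + L) ha (by linarith)
    have hposL := hpos (a + L) (by linarith)
    nlinarith [mul_le_mul_of_nonneg_left hInt hβ.le]
  obtain ⟨t, ⟨hta, htb⟩, htc⟩ := hEx
  have hζτ := gronwall_unif ζ hcont hpos β C₀ hβ hC₀ h2 t τ (ha.trans hta) (htb.trans hτ)
  have heq : K * c₀ = K / β * (ζ a / L + E₀ * (a + 1) ^ (-p)) := by
    have hmul : β * L * (K * c₀) = β * L * (K / β * (ζ a / L + E₀ * (a + 1) ^ (-p))) := by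
      rw [hc₀]
      field_simp
    exact mul_left_cancel₀ (ne_of_gt hβL) hmul
  calc ζ τ ≤ K * ζ t := hζτ
  _ ≤ K * c₀ := by nlinarith
  _ = K / β * (ζ a / L + E₀ * (a + 1) ^ (-p)) := heq

/-- Grönwall-type iteration lemma: a continuous positive function satisfying the two
integrated inequalities is uniformly bounded by its value at `τ₀` and decays like
`(1+τ)^{-p}`. -/
theorem gronwall_decay (ζ : ℝ → ℝ) (hcont : Continuous ζ)
    (hpos : ∀ τ : ℝ, 0 ≤ τ → 0 < ζ τ)
    (E₀ β p C₀ : ℝ) (hE₀ : 0 < E₀) (hβ : 0 < β) (hp : 0 < p) (hC₀ : 0 < C₀)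
    (h1 : ∀ τ₁ τ₂ : ℝ, 0 ≤ τ₁ → τ₁ ≤ τ₂ →
      ζ τ₂ + β * ∫ s in τ₁..τ₂, ζ s ≤ ζ τ₁ + E₀ * (τ₂ - τ₁) * (τ₁ + 1) ^ (-p))
    (h2 : ∀ τ₀ τ₁ τ₂ : ℝ, 0 ≤ τ₀ → τ₀ ≤ τ₁ → τ₁ ≤ τ₂ →
      ζ τ₂ + β * ∫ s in τ₁..τ₂, ζ s ≤ ζ τ₁ + C₀ * (τ₂ - τ₁) * ζ τ₀) :
    (∀ τ₀ τ : ℝ, 0 ≤ τ₀ → τ₀ ≤ τ → ζ τ ≤ (1 + C₀ * β⁻¹) * ζ τ₀) ∧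
    ∃ C : ℝ, 0 < C ∧ ∀ τ₀ τ : ℝ, 0 ≤ τ₀ → τ₀ ≤ τ →
      ζ τ ≤ C * (ζ τ₀ + E₀) * (1 + τ) ^ (-p) := by
  have lemA := gronwall_unif ζ hcont hpos β C₀ hβ hC₀ h2
  have lemC := gronwall_step ζ hcont hpos E₀ β p C₀ hE₀ hβ hC₀ h1 h2
  set K : ℝ := max 1 (C₀ / β) with hKdef
  have hK1 : 1 ≤ K := le_max_left _ _
  have hKpos : (0:ℝ) < K := lt_of_lt_of_le one_pos hK1
  have hζ0 : 0 < ζ 0 := hpos 0 le_rfl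
  constructor
  · intro τ₀ τ h0 hle
    have hb := lemA τ₀ τ h0 hle
    have hKle : K ≤ 1 + C₀ * β⁻¹ := by
      apply max_le
      · have : 0 < C₀ * β⁻¹ := mul_pos hC₀ (inv_pos.2 hβ)
        linarith
      · rw [div_eq_mul_inv]
        have : 0 < C₀ * β⁻¹ := mul_pos hC₀ (inv_pos.2 hβ)
        linarith
    have := hpos τ₀ h0
    nlinarith
  · -- decay part
    set a : ℕ → ℝ := fun n => 2 ^ n - 1 with hadef
    have hone_le : ∀ n : ℕ, (1:ℝ) ≤ 2 ^ n := fun n => one_le_pow₀ one_le_two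
    have ha_nonneg : ∀ n, 0 ≤ a n := fun n => by
      simp only [hadef]; linarith [hone_le n]
    have hpa : ∀ n, a n + 1 = 2 ^ n := fun n => by simp [hadef]
    have hastep : ∀ n, a (n + 1) = a n + 2 ^ n := fun n => by
      simp only [hadef]; ring
    set u : ℕ → ℝ := fun n => ζ (a n) * ((2:ℝ) ^ n) ^ p with hudef
    set A : ℝ := K / β * (2:ℝ) ^ p with hAdef
    have h2p : (0:ℝ) < (2:ℝ) ^ p := Real.rpow_pos_of_pos (by norm_num) p
    have hApos : 0 < A := mul_pos (div_pos hKpos hβ) h2p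
    have hupos : ∀ n, 0 < u n := fun n =>
      mul_pos (hpos _ (ha_nonneg n)) (Real.rpow_pos_of_pos (by positivity) p)
    have hrec : ∀ n, u (n + 1) ≤ A * ((2:ℝ) ^ n)⁻¹ * u n + A * E₀ := by
      intro n
      have h2n : (0:ℝ) < 2 ^ n := by positivity
      have hC := lemC (a n) (2 ^ n) (a (n + 1)) (ha_nonneg n) h2n (le_of_eq (hastep n).symm)
      rw [hpa n] at hC
      have hmul : ((2:ℝ) ^ (n + 1) : ℝ) ^ p = (2:ℝ) ^ p * ((2:ℝ) ^ n) ^ p := by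
        rw [pow_succ, mul_comm ((2:ℝ) ^ n) 2, Real.mul_rpow (by norm_num) (by positivity)]
      have hperp : ((2:ℝ) ^ n) ^ (-p) * ((2:ℝ) ^ n) ^ p = 1 := by
        rw [← Real.rpow_add h2n]; simp
      have hpow_pos : (0:ℝ) < ((2:ℝ) ^ (n + 1)) ^ p := Real.rpow_pos_of_pos (by positivity) p
      calc u (n + 1) = ζ (a (n + 1)) * ((2:ℝ) ^ (n + 1)) ^ p := rfl
      _ ≤ (K / β * (ζ (a n) / 2 ^ n + E₀ * ((2:ℝ) ^ n) ^ (-p))) * ((2:ℝ) ^ (n + 1)) ^ p := by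
          exact mul_le_mul_of_nonneg_right hC hpow_pos.le
      _ = A * ((2:ℝ) ^ n)⁻¹ * u n + A * E₀ := by
          rw [hmul]
          simp only [hudef, hAdef]
          linear_combination (K / β * (2:ℝ) ^ p * E₀) * hperp
    obtain ⟨N, hN⟩ := pow_unbounded_of_one_lt (2 * A) (one_lt_two (α := ℝ))
    have hhalf : ∀ n, N ≤ n → A * ((2:ℝ) ^ n)⁻¹ ≤ 1 / 2 := by
      intro n hn
      have h1n : (2:ℝ) ^ N ≤ 2 ^ n := pow_le_pow_right₀ (by norm_num) hn
      have h2n : (0:ℝ) < 2 ^ n := by positivity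
      rw [mul_inv_le_iff₀ h2n]
      nlinarith
    set B : ℝ := max (K * ζ 0 * ((2:ℝ) ^ N) ^ p) (2 * A * E₀) with hBdef
    have hBpos : 0 < B :=
      lt_of_lt_of_le (by positivity) (le_max_left _ _)
    have hub : ∀ n, n ≤ N → u n ≤ B := by
      intro n hn
      have hz : ζ (a n) ≤ K * ζ 0 := lemA 0 (a n) le_rfl (ha_nonneg n)
      have hpw : ((2:ℝ) ^ n) ^ p ≤ ((2:ℝ) ^ N) ^ p :=
        Real.rpow_le_rpow (by positivity) (pow_le_pow_right₀ (by norm_num) hn) hp.le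
      calc u n = ζ (a n) * ((2:ℝ) ^ n) ^ p := rfl
      _ ≤ (K * ζ 0) * ((2:ℝ) ^ N) ^ p :=
          mul_le_mul hz hpw (by positivity) (by positivity)
      _ ≤ B := le_max_left _ _
    have hkey : ∀ k, u (N + k) ≤ B := by
      intro k
      induction k with
      | zero => exact hub N le_rfl
      | succ k ih =>
        have hr := hrec (N + k)
        have hh := hhalf (N + k) (Nat.le_add_right _ _)
        have hu := (hupos (N + k)).le
        have hAE : A * E₀ ≤ B / 2 := by
          have := le_max_right (K * ζ 0 * ((2:ℝ) ^ N) ^ p) (2 * A * E₀)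
          linarith
        have hmain : A * ((2:ℝ) ^ (N + k))⁻¹ * u (N + k) ≤ (1 / 2) * B := by
          calc A * ((2:ℝ) ^ (N + k))⁻¹ * u (N + k) ≤ (1 / 2) * u (N + k) :=
              mul_le_mul_of_nonneg_right hh hu
          _ ≤ (1 / 2) * B := by linarith
        have hsucc : N + (k + 1) = (N + k) + 1 := rfl
        rw [hsucc]
        linarith
    have hubB : ∀ n, u n ≤ B := by
      intro n
      rcases le_or_gt n N with h | h
      · exact hub n h
      · obtain ⟨k, rfl⟩ := Nat.exists_eq_add_of_le h.le
        exact hkey k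
    -- global bound on ζ τ * (1+τ)^p
    set C₁ : ℝ := max (K * ζ 0 * (2:ℝ) ^ p) (K / β * (B + E₀) * (4:ℝ) ^ p) with hC₁def
    have h4p : (0:ℝ) < (4:ℝ) ^ p := Real.rpow_pos_of_pos (by norm_num) p
    have hC₁pos : 0 < C₁ := lt_of_lt_of_le (by positivity) (le_max_left _ _)
    have hglob : ∀ τ : ℝ, 0 ≤ τ → ζ τ * (1 + τ) ^ p ≤ C₁ := by
      intro τ hτ
      rcases le_or_gt τ 1 with hτ1 | hτ1
      · have hz : ζ τ ≤ K * ζ 0 := lemA 0 τ le_rfl hτ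
        have hpw : (1 + τ) ^ p ≤ (2:ℝ) ^ p :=
          Real.rpow_le_rpow (by linarith) (by linarith) hp.le
        calc ζ τ * (1 + τ) ^ p ≤ (K * ζ 0) * (2:ℝ) ^ p :=
            mul_le_mul hz hpw (by positivity) (by positivity)
        _ ≤ C₁ := le_max_left _ _
      · obtain ⟨n, hmin, hspec⟩ : ∃ n : ℕ, (2:ℝ) ^ (n + 1) ≤ 1 + τ ∧ 1 + τ < 2 ^ (n + 2) := by
          by_contra hcon
          push_neg at hcon
          have hall : ∀ n : ℕ, (2:ℝ) ^ (n + 1) ≤ 1 + τ := by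
            intro n
            induction n with
            | zero => norm_num; linarith
            | succ k ih =>
              have h := hcon k ih
              calc (2:ℝ) ^ (k + 1 + 1) = 2 ^ (k + 2) := by ring
              _ ≤ 1 + τ := h
          obtain ⟨M, hM⟩ := pow_unbounded_of_one_lt (1 + τ) (one_lt_two (α := ℝ))
          have h2 : (2:ℝ) ^ M ≤ 2 ^ (M + 1) := pow_le_pow_right₀ (by norm_num) (Nat.le_succ M)
          linarith [hall M]
        have h2n : (0:ℝ) < 2 ^ n := by positivity
        have hτa : a n + 2 ^ n ≤ τ := by
          have hpw : (2:ℝ) ^ (n + 1) = 2 ^ n + 2 ^ n := by ring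
          simp only [hadef]
          nlinarith [hmin]
        have hC := lemC (a n) (2 ^ n) τ (ha_nonneg n) h2n hτa
        rw [hpa n] at hC
        have hXp : (0:ℝ) < ((2:ℝ) ^ n) ^ p := Real.rpow_pos_of_pos h2n p
        have hXnegp : (0:ℝ) < ((2:ℝ) ^ n) ^ (-p) := Real.rpow_pos_of_pos h2n (-p)
        have hperp : ((2:ℝ) ^ n) ^ (-p) * ((2:ℝ) ^ n) ^ p = 1 := by
          rw [← Real.rpow_add h2n]; simp
        have hζan : ζ (a n) ≤ B * ((2:ℝ) ^ n) ^ (-p) := by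
          have hB := hubB n
          have : ζ (a n) * ((2:ℝ) ^ n) ^ p ≤ B := hB
          nlinarith [hperp]
        have hdiv : ζ (a n) / 2 ^ n ≤ B * ((2:ℝ) ^ n) ^ (-p) := by
          have hz : ζ (a n) / 2 ^ n ≤ ζ (a n) := by
            rw [div_le_iff₀ h2n]
            nlinarith [hpos (a n) (ha_nonneg n), hone_le n]
          linarith
        have hstep1 : ζ τ ≤ K / β * (B + E₀) * ((2:ℝ) ^ n) ^ (-p) := by
          calc ζ τ ≤ K / β * (ζ (a n) / 2 ^ n + E₀ * ((2:ℝ) ^ n) ^ (-p)) := hC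
          _ ≤ K / β * (B * ((2:ℝ) ^ n) ^ (-p) + E₀ * ((2:ℝ) ^ n) ^ (-p)) := by
              apply mul_le_mul_of_nonneg_left _ (by positivity)
              linarith
          _ = K / β * (B + E₀) * ((2:ℝ) ^ n) ^ (-p) := by ring
        have hup : (1 + τ) ^ p ≤ (4:ℝ) ^ p * ((2:ℝ) ^ n) ^ p := by
          have h4 : ((2:ℝ) ^ (n + 2)) = 4 * 2 ^ n := by ring
          have h5 : (1 + τ) ^ p ≤ ((2:ℝ) ^ (n + 2)) ^ p :=
            Real.rpow_le_rpow (by linarith) hspec.le hp.le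
          rw [h4, Real.mul_rpow (by norm_num) (by positivity)] at h5
          exact h5
        calc ζ τ * (1 + τ) ^ p
            ≤ (K / β * (B + E₀) * ((2:ℝ) ^ n) ^ (-p)) * ((4:ℝ) ^ p * ((2:ℝ) ^ n) ^ p) :=
              mul_le_mul hstep1 hup (by positivity) (by positivity)
        _ = K / β * (B + E₀) * (4:ℝ) ^ p := by
              linear_combination (K / β * (B + E₀) * (4:ℝ) ^ p) * hperp
        _ ≤ C₁ := le_max_right _ _
    refine ⟨C₁ / E₀, div_pos hC₁pos hE₀, ?_⟩
    intro τ₀ τ h0 hle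
    have hτ : 0 ≤ τ := h0.trans hle
    have hg := hglob τ hτ
    have h1τpos : (0:ℝ) < 1 + τ := by linarith
    have hxp : 0 < (1 + τ) ^ p := Real.rpow_pos_of_pos h1τpos p
    have hneg : (1 + τ) ^ (-p) = ((1 + τ) ^ p)⁻¹ := by
      rw [Real.rpow_neg h1τpos.le]
    rw [hneg]
    have hC₁le : C₁ ≤ C₁ / E₀ * (ζ τ₀ + E₀) := by
      have hz := hpos τ₀ h0
      rw [div_mul_eq_mul_div, le_div_iff₀ hE₀]
      nlinarith
    calc ζ τ = ζ τ * (1 + τ) ^ p * ((1 + τ) ^ p)⁻¹ := by field_simp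
    _ ≤ (C₁ / E₀ * (ζ τ₀ + E₀)) * ((1 + τ) ^ p)⁻¹ :=
        mul_le_mul_of_nonneg_right (hg.trans hC₁le) (inv_nonneg.2 hxp.le)
end
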